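/- Let g ∈ ℂ[x_1,…,x_{n−1},z] be weighted homogeneous of degree d with respect to positive integer weights (w_1,…,w_{n−1},w_n), let k ≥ 1 and 0 ≤ i ≤ k−1, and suppose V_i^k(g) ≠ 0. Then i·w_n ≤ d, and V_i^k(g) is weighted homogeneous of degree d − i·w_n in ℂ[x_1,…,x_{n−1},z_1,…,z_k] with respect to the weights assigning w_m to x_m (1 ≤ m ≤ n−1) and w_n to each variable z_a (1 ≤ a ≤ k). -/
import Mathlib


open MvPolynomial

lemma weight_mapDomain {σ τ M : Type*} [AddCommMonoid M] (w : τ → M) (f : σ → τ) (v : σ →₀ ℕ) :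
    Finsupp.weight w (Finsupp.mapDomain f v) = Finsupp.weight (w ∘ f) v := by
  rw [Finsupp.weight_apply, Finsupp.weight_apply, Finsupp.sum_mapDomain_index]
  · rfl
  · intro i; simp
  · intro i c1 c2; rw [add_smul]

lemma iswh_rename {σ τ : Type*} (w : τ → ℕ) (f : σ → τ) (g : MvPolynomial σ ℂ) (d : ℕ)
    (hg : g.IsWeightedHomogeneous (w ∘ f) d) :
    (rename f g).IsWeightedHomogeneous w d := by
  intro u hu
  obtain ⟨v, hv, hcv⟩ := coeff_rename_ne_zero f g u hu
  rw [← hv]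
  show Finsupp.weight w (Finsupp.mapDomain f v) = d
  rw [weight_mapDomain]
  exact hg hcv

lemma iswh_neg {σ : Type*} (w : σ → ℕ) (p : MvPolynomial σ ℂ) (m : ℕ)
    (hp : p.IsWeightedHomogeneous w m) : (-p).IsWeightedHomogeneous w m := by
  rw [← mem_weightedHomogeneousSubmodule] at hp ⊢
  exact Submodule.neg_mem _ hp

lemma iswh_sub {σ : Type*} (w : σ → ℕ) (p q : MvPolynomial σ ℂ) (m : ℕ)
    (hp : p.IsWeightedHomogeneous w m) (hq : q.IsWeightedHomogeneous w m) :
    (p - q).IsWeightedHomogeneous w m := by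
  rw [← mem_weightedHomogeneousSubmodule] at hp hq ⊢
  exact Submodule.sub_mem _ hp hq

/-- key divisibility lemma -/
lemma aux_div {σ : Type*} (w : σ → ℕ) (E D : ℕ) (Q V : MvPolynomial σ ℂ)
    (hQ : Q.IsWeightedHomogeneous w E) (hQ0 : Q ≠ 0) (hV0 : V ≠ 0)
    (hP : (V * Q).IsWeightedHomogeneous w D) :
    ∃ e, e + E = D ∧ V.IsWeightedHomogeneous w e := by
  classical
  have hfin := weightedHomogeneousComponent_finsupp (w := w) V
  set T := hfin.toFinset with hT
  have hsum : ∑ e ∈ T, weightedHomogeneousComponent w e V = V := by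
    rw [← finsum_eq_sum _ hfin, sum_weightedHomogeneousComponent]
  have hVQ0 : V * Q ≠ 0 := mul_ne_zero hV0 hQ0
  have key : V * Q = ∑ e ∈ T, weightedHomogeneousComponent w D
      ((weightedHomogeneousComponent w e V) * Q) := by
    conv_lhs => rw [← hP.weightedHomogeneousComponent_same, ← hsum, Finset.sum_mul, map_sum]
  by_cases hE : ∃ e ∈ T, e + E = D
  · obtain ⟨e₀, he₀T, he₀⟩ := hE
    have hhom : ∀ e, ((weightedHomogeneousComponent w e V) * Q).IsWeightedHomogeneous w (e + E) :=
      fun e => (weightedHomogeneousComponent_isWeightedHomogeneous e V).mul hQ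
    have hVeq : V * Q = (weightedHomogeneousComponent w e₀ V) * Q := by
      rw [key, Finset.sum_eq_single e₀]
      · exact he₀ ▸ (hhom e₀).weightedHomogeneousComponent_same
      · intro e _ hne
        exact (hhom e).weightedHomogeneousComponent_ne D (by omega)
      · intro h; exact absurd he₀T h
    have : V = weightedHomogeneousComponent w e₀ V := mul_right_cancel₀ hQ0 hVeq
    exact ⟨e₀, he₀, this ▸ weightedHomogeneousComponent_isWeightedHomogeneous e₀ V⟩
  · exfalso
    apply hVQ0
    rw [key, Finset.sum_eq_zero]
    intro e heT
    exact ((weightedHomogeneousComponent_isWeightedHomogeneous e V).mul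
      hQ).weightedHomogeneousComponent_ne D (fun h => hE ⟨e, heT, h.symm⟩)


/-- The `k×k` matrix whose `(a,b)` entry is `z_a^b` for `b ≠ i` and is
`g(x₁,…,x_{n−1},z_a)` for `b = i`. -/
noncomputable def Mmat {n k : ℕ} (g : MvPolynomial (Fin (n - 1) ⊕ Unit) ℂ) (i : Fin k) :
    Matrix (Fin k) (Fin k) (MvPolynomial (Fin (n - 1) ⊕ Fin k) ℂ) :=
  fun a b =>
    if b = i then rename (Sum.map id fun _ => a) g
    else (X (Sum.inr a) : MvPolynomial (Fin (n - 1) ⊕ Fin k) ℂ) ^ (b : ℕ)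

/-- The Vandermonde determinant `∏_{a<b} (z_b − z_a)`. -/
noncomputable def Vdm (n k : ℕ) : MvPolynomial (Fin (n - 1) ⊕ Fin k) ℂ :=
  ∏ p ∈ Finset.univ.filter (fun p : Fin k × Fin k => p.1 < p.2),
    (X (Sum.inr p.2) - X (Sum.inr p.1))

/-- if `g` is weighted homogeneous of degree `d` and `Vᵢᵏ(g) ≠ 0`,
then `i·w_n ≤ d` and `Vᵢᵏ(g)` is weighted homogeneous of degree `d − i·w_n`. -/
theorem stmt8 (n k : ℕ) (hk : 1 ≤ k) (i : Fin k)
    (g : MvPolynomial (Fin (n - 1) ⊕ Unit) ℂ)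
    (d : ℕ) (w : Fin (n - 1) → ℕ) (wn : ℕ)
    (hw : ∀ m, 0 < w m) (hwn : 0 < wn)
    (hg : g.IsWeightedHomogeneous (Sum.elim w fun _ => wn) d)
    (V : MvPolynomial (Fin (n - 1) ⊕ Fin k) ℂ)
    (hV : (Mmat g i).det = V * Vdm n k) (hV0 : V ≠ 0) :
    (i : ℕ) * wn ≤ d ∧
      V.IsWeightedHomogeneous (Sum.elim w fun _ : Fin k => wn) (d - (i : ℕ) * wn) := by
  classical
  set W : (Fin (n - 1) ⊕ Fin k) → ℕ := Sum.elim w fun _ : Fin k => wn with hW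
  set c : Fin k → ℕ := fun b => if b = i then d else (b : ℕ) * wn with hc
  -- each entry of column b is weighted homogeneous of degree c b
  have hentry : ∀ a b : Fin k, (Mmat g i a b).IsWeightedHomogeneous W (c b) := by
    intro a b
    by_cases hb : b = i
    · simp only [Mmat, hc, if_pos hb]
      apply iswh_rename
      convert hg using 2
      funext s; cases s <;> rfl
    · simp only [Mmat, hc, if_neg hb]
      rw [X_pow_eq_monomial]
      apply isWeightedHomogeneous_monomial
      simp [Finsupp.weight_apply, Finsupp.sum_single_index, hW, mul_comm]
  -- the determinant is weighted homogeneous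
  have hdet : ((Mmat g i).det).IsWeightedHomogeneous W (∑ b : Fin k, c b) := by
    rw [Matrix.det_apply]
    apply IsWeightedHomogeneous.sum
    intro σ _
    have hp : (∏ b : Fin k, Mmat g i (σ b) b).IsWeightedHomogeneous W (∑ b : Fin k, c b) :=
      IsWeightedHomogeneous.prod _ _ _ (fun b _ => hentry (σ b) b)
    rcases Int.units_eq_one_or (Equiv.Perm.sign σ) with h | h <;> rw [h]
    · simpa using hp
    · have : ((-1 : ℤˣ) • ∏ b : Fin k, Mmat g i (σ b) b)
          = -(∏ b : Fin k, Mmat g i (σ b) b) := by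
        simp [Units.smul_def]
      rw [this]
      exact iswh_neg _ _ _ hp
  -- Vdm is homogeneous
  set F := Finset.univ.filter (fun p : Fin k × Fin k => p.1 < p.2) with hF
  have hvdm : (Vdm n k).IsWeightedHomogeneous W (F.card * wn) := by
    have := IsWeightedHomogeneous.prod F
      (fun p : Fin k × Fin k => (X (Sum.inr p.2) - X (Sum.inr p.1) :
        MvPolynomial (Fin (n - 1) ⊕ Fin k) ℂ)) (fun _ => wn) (w := W)
      (fun p _ => iswh_sub _ _ _ _
        (isWeightedHomogeneous_X ℂ W (Sum.inr p.2)) (isWeightedHomogeneous_X ℂ W (Sum.inr p.1)))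
    rw [Finset.sum_const, smul_eq_mul] at this
    exact this
  have hvdm0 : Vdm n k ≠ 0 := by
    rw [Vdm]
    apply Finset.prod_ne_zero_iff.mpr
    intro p hp
    rw [Finset.mem_filter] at hp
    apply sub_ne_zero.mpr
    intro h
    exact absurd (Sum.inr_injective (X_injective h)) (by simp [hp.2.ne'])
  -- apply the division lemma
  obtain ⟨e, he, hVe⟩ := aux_div W (F.card * wn) (∑ b : Fin k, c b) (Vdm n k) V hvdm hvdm0 hV0
    (hV ▸ hdet)
  -- compute F.card = ∑ b
  have hcard : F.card = ∑ b : Fin k, (b : ℕ) := by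
    rw [hF, Finset.card_eq_sum_card_fiberwise (f := Prod.snd) (t := Finset.univ)
      (fun x _ => Finset.mem_univ _)]
    apply Finset.sum_congr rfl
    intro b _
    rw [← Fin.card_Iio (b := b), ← Finset.filter_gt_eq_Iio]
    apply Finset.card_bij (fun p _ => p.1)
    · intro p hp
      simp only [Finset.mem_filter, Finset.mem_univ, true_and] at hp ⊢
      rw [hp.2] at hp
      exact hp.1
    · intro p hp q hq hpq
      simp only [Finset.mem_filter] at hp hq
      exact Prod.ext hpq (hp.2.trans hq.2.symm)
    · intro a ha
      simp only [Finset.mem_filter, Finset.mem_univ, true_and] at ha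
      exact ⟨(a, b), by simp [ha], rfl⟩
  -- arithmetic
  have hsumc : ∑ b : Fin k, c b = d + ∑ b ∈ Finset.univ.erase i, (b : ℕ) * wn := by
    rw [← Finset.add_sum_erase _ _ (Finset.mem_univ i)]
    simp only [hc, if_pos rfl]
    congr 1
    apply Finset.sum_congr rfl
    intro b hb
    rw [if_neg (Finset.ne_of_mem_erase hb)]
  have hsumi : ∑ b : Fin k, (b : ℕ) = (i : ℕ) + ∑ b ∈ Finset.univ.erase i, (b : ℕ) := by
    rw [← Finset.add_sum_erase _ _ (Finset.mem_univ i)]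
  have key : e + (i : ℕ) * wn = d := by
    have := he
    rw [hcard, hsumc, hsumi, add_mul, Finset.sum_mul] at this
    simp only [← Finset.sum_mul] at this
    omega
  refine ⟨by omega, ?_⟩
  have : d - (i : ℕ) * wn = e := by omega
  rw [this]
  exact hVe
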